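/- Let p ≡ 3 (mod 8) be an odd prime. Then the strong starter S_2 = { {x, 2x} : x ∈ QR(p) } for Z/pZ is a Skolem starter: it can be written as pairs {x_i, y_i}, i = 1,...,(p-1)/2, with representatives chosen so that y_i > x_i (in the ordering 1 < 2 < ... < p-1 of residues) and y_i - x_i ≡ i (mod p). -/
import Mathlib


/-- The set of quadratic residues modulo `p`: nonzero squares in `ZMod p`. -/
def QRset (p : ℕ) : Set (ZMod p) := {x | x ≠ 0 ∧ ∃ y : ZMod p, y ≠ 0 ∧ y ^ 2 = x}

/-- The "gap" of the pair `{z, c*z}`: the difference between the natural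
representatives (in `{0,…,p-1}`) of its larger and smaller element. -/
def pairGap (p : ℕ) (c z : ZMod p) : ℕ :=
  max z.val (c * z).val - min z.val (c * z).val

lemma mem_QRset {p : ℕ} [NeZero p] {x : ZMod p} :
    x ∈ QRset p ↔ x ≠ 0 ∧ IsSquare x := by
  constructor
  · rintro ⟨hx, y, -, rfl⟩
    exact ⟨hx, ⟨y, (sq y)⟩⟩
  · rintro ⟨hx, y, rfl⟩
    refine ⟨hx, y, ?_, (sq y)⟩
    rintro rfl
    exact hx (by simp)

/-- gap computation for "small" residues -/
lemma gap_small {p : ℕ} [NeZero p] {x : ZMod p} (h1 : 1 ≤ x.val)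
    (h2 : 2 * x.val < p) : pairGap p 2 x = x.val := by
  have h : (2 * x).val = 2 * x.val := by
    rw [two_mul, ZMod.val_add_of_lt (by omega), two_mul]
  unfold pairGap
  rw [h]; omega

/-- gap computation for "large" residues -/
lemma gap_large {p : ℕ} [NeZero p] {x : ZMod p} (h1 : p ≤ 2 * x.val) :
    pairGap p 2 x = p - x.val := by
  have hxp : x.val < p := ZMod.val_lt x
  have h : (2 * x).val = 2 * x.val - p := by
    rw [two_mul, ZMod.val_add]
    have : x.val + x.val = (2 * x.val - p) + 1 * p := by omega
    rw [this, Nat.add_mul_mod_self_right, Nat.mod_eq_of_lt (by omega), two_mul]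
  unfold pairGap
  rw [h]; omega

lemma neg_isSquare_iff {p : ℕ} [Fact p.Prime] (hp4 : p % 4 = 3) {u : ZMod p}
    (hu : u ≠ 0) : IsSquare (-u) ↔ ¬ IsSquare u := by
  have hns : ¬ IsSquare (-1 : ZMod p) := by
    rw [ZMod.exists_sq_eq_neg_one_iff]
    simp [hp4]
  have hnu : (-u : ZMod p) ≠ 0 := neg_ne_zero.mpr hu
  have hchi : quadraticChar (ZMod p) (-u)
      = quadraticChar (ZMod p) (-1) * quadraticChar (ZMod p) u := by
    rw [← map_mul]; ring_nf
  have h1 : quadraticChar (ZMod p) (-1) = -1 :=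
    quadraticChar_neg_one_iff_not_isSquare.mpr hns
  rw [← quadraticChar_one_iff_isSquare hnu, hchi, h1]
  rw [← quadraticChar_one_iff_isSquare hu]
  rcases quadraticChar_dichotomy hu with h | h <;> simp [h]

/-- The strong starter `S_2 = {{x, 2x} : x ∈ QR(p)}` is Skolem: for each
`d ∈ {1,…,(p-1)/2}` there is exactly one pair whose larger element minus its
smaller element (as residues in `{1,…,p-1}`) equals `d`. -/
theorem S_two_skolem (p : ℕ) (hp : p.Prime) (hp8 : p % 8 = 3) :
    ∀ d : ℕ, 1 ≤ d → d ≤ (p - 1) / 2 →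
      ∃! x : ZMod p, x ∈ QRset p ∧ pairGap p 2 x = d := by
  intro d hd1 hd2
  haveI : Fact p.Prime := ⟨hp⟩
  have hp3 : 3 ≤ p := by omega
  have hodd : p % 2 = 1 := by omega
  have hp4 : p % 4 = 3 := by omega
  have hdp : 2 * d < p := by omega
  -- the candidate residues
  set D : ZMod p := (d : ZMod p) with hD
  have hDval : D.val = d := ZMod.val_natCast_of_lt (by omega)
  have hD0 : D ≠ 0 := by
    intro h
    have := hDval
    rw [h, ZMod.val_zero] at this
    omega
  have hnDval : (-D).val = p - d := by
    rw [ZMod.neg_val, if_neg hD0, hDval]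
  -- gap computations for the candidates
  have gapD : pairGap p 2 D = d := by
    rw [gap_small (by omega) (by omega), hDval]
  have gapnD : pairGap p 2 (-D) = d := by
    rw [gap_large (by rw [hnDval]; omega), hnDval]; omega
  -- any solution is D or -D
  have key : ∀ x : ZMod p, x ≠ 0 → pairGap p 2 x = d → x = D ∨ x = -D := by
    intro x hx hgap
    have hx1 : 1 ≤ x.val := by
      have := ZMod.val_lt x
      rcases Nat.eq_zero_or_pos x.val with h | h
      · exact absurd ((ZMod.val_eq_zero x).mp h) hx
      · omega
    rcases lt_or_ge (2 * x.val) p with h | h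
    · left
      rw [gap_small hx1 h] at hgap
      rw [hD, ← hgap, ZMod.natCast_val, ZMod.cast_id]
    · right
      rw [gap_large h] at hgap
      have hxval : x.val = p - d := by have := ZMod.val_lt x; omega
      have : x.val = (-D).val := by rw [hnDval, hxval]
      exact ZMod.val_injective p this
  -- exactly one of D, -D is a square
  have hone := neg_isSquare_iff hp4 hD0
  by_cases hsq : IsSquare D
  · refine ⟨D, ⟨mem_QRset.mpr ⟨hD0, hsq⟩, gapD⟩, ?_⟩
    rintro y ⟨hy, hgy⟩
    rcases key y (mem_QRset.mp hy).1 hgy with h | h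
    · exact h
    · exfalso
      exact (hone.mp (h ▸ (mem_QRset.mp hy).2)) hsq
  · refine ⟨-D, ⟨mem_QRset.mpr ⟨neg_ne_zero.mpr hD0, hone.mpr hsq⟩, gapnD⟩, ?_⟩
    rintro y ⟨hy, hgy⟩
    rcases key y (mem_QRset.mp hy).1 hgy with h | h
    · exact absurd (h ▸ (mem_QRset.mp hy).2) hsq
    · exact h
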